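/- arXiv:2412.05726 — 9 statements merged into one kernel-verified Lean document; each statement's English description precedes it below -/
import Mathlib

section
/- Let s_β, s_λ > 0 with s_β·s_λ < 1, β₀ ∈ ℝ, λ₀ ≥ 0. Define λ* = λ₀ if λ₀ ≥ |β₀|/s_β, and λ* = (λ₀ − s_λ|β₀|)⁺/(1 − s_λ s_β) otherwise, and define β* = (|β₀| − s_β λ*)⁺ · sgn(β₀). Then (β*, λ*) is a global minimizer of the proximal cost F(β,λ) = λ|β| + (β−β₀)²/(2s_β) + (λ−λ₀)²/(2s_λ) over ℝ × [0,∞). -/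
set_option maxHeartbeats 1000000

lemma key_prox (sβ sl : ℝ) (hsβ : 0 < sβ) (hsl : 0 < sl) (hprod : sβ * sl < 1)
    (β₀ l0 βs ls : ℝ) (hls : 0 ≤ ls)
    (ha : |β₀ - βs| ≤ sβ * ls)
    (hab : (β₀ - βs) * βs = sβ * ls * |βs|)
    (hc : l0 - ls ≤ sl * |βs|)
    (hcomp : ls * (sl * |βs| - (l0 - ls)) = 0)
    (β lam : ℝ) (hlam : 0 ≤ lam) :
    ls * |βs| + (βs - β₀)^2 / (2*sβ) + (ls - l0)^2 / (2*sl)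
      ≤ lam * |β| + (β - β₀)^2 / (2*sβ) + (lam - l0)^2 / (2*sl) := by
  have h1 : (β₀ - βs) * β ≤ sβ * ls * |β| := by
    calc (β₀ - βs) * β ≤ |(β₀ - βs) * β| := le_abs_self _
      _ = |β₀ - βs| * |β| := abs_mul _ _
      _ ≤ sβ * ls * |β| := mul_le_mul_of_nonneg_right ha (abs_nonneg _)
  have hd1 : |β| - |βs| ≤ |β - βs| := abs_sub_abs_le_abs_sub _ _
  have hd2 : |βs| - |β| ≤ |β - βs| := by
    have := abs_sub_abs_le_abs_sub βs β
    rwa [abs_sub_comm] at this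
  have hsq : |β - βs| ^ 2 = (β - βs) ^ 2 := sq_abs _
  have hclam : 0 ≤ 2 * sβ * (lam * (sl * |βs| - (l0 - ls))) :=
    mul_nonneg (by positivity) (mul_nonneg hlam (by linarith))
  have h5 : (lam - ls)*(sl*|βs| - (l0 - ls)) = lam * (sl * |βs| - (l0 - ls)) := by
    linear_combination (-1 : ℝ) * hcomp
  have key2 : 0 ≤ sl * (β - βs)^2 + sβ * (lam - ls)^2
      + 2*sβ*sl*((lam - ls)*(|β| - |βs|)) + 2*sβ*((lam - ls)*(sl*|βs| - (l0 - ls))) := by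
    rw [h5]
    rcases le_total ls lam with h | h
    · have P1 : 0 ≤ sβ * ((lam - ls) - sl*|β - βs|)^2 := by positivity
      have P2 : 0 ≤ sl * (1 - sβ*sl) * |β - βs|^2 := by
        have : (0:ℝ) ≤ 1 - sβ*sl := by linarith
        positivity
      have P3 : 0 ≤ 2*sβ*sl*((lam - ls) * ((|β| - |βs|) + |β - βs|)) := by
        exact mul_nonneg (by positivity) (mul_nonneg (by linarith) (by linarith))
      nlinarith [P1, P2, P3, hclam, hsq]
    · have P1 : 0 ≤ sβ * ((ls - lam) - sl*|β - βs|)^2 := by positivity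
      have P2 : 0 ≤ sl * (1 - sβ*sl) * |β - βs|^2 := by
        have : (0:ℝ) ≤ 1 - sβ*sl := by linarith
        positivity
      have P3 : 0 ≤ 2*sβ*sl*((ls - lam) * (|β - βs| - (|β| - |βs|))) := by
        exact mul_nonneg (by positivity) (mul_nonneg (by linarith) (by linarith))
      nlinarith [P1, P2, P3, hclam, hsq]
  have h1' : 0 ≤ 2*sl*(sβ*ls*|β| - (β₀ - βs)*β) := by
    exact mul_nonneg (by positivity) (by linarith)
  have hab' : 2*sl*((β₀ - βs)*βs) = 2*sl*(sβ*ls*|βs|) := by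
    linear_combination 2*sl*hab
  have hpos : (0:ℝ) < 2*sβ*sl := by positivity
  rw [← sub_nonneg]
  have e : (lam * |β| + (β - β₀)^2 / (2*sβ) + (lam - l0)^2 / (2*sl))
      - (ls * |βs| + (βs - β₀)^2 / (2*sβ) + (ls - l0)^2 / (2*sl))
      = (2*sβ*sl*(lam*|β| - ls*|βs|) + sl*((β - β₀)^2 - (βs - β₀)^2)
        + sβ*((lam - l0)^2 - (ls - l0)^2)) / (2*sβ*sl) := by
    field_simp
    ring
  rw [e]
  apply div_nonneg _ hpos.le
  nlinarith [key2, h1', hab']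

/-- Closed form for the variable-penalty ℓ1 proximal operator when s_β s_λ < 1:
the stated (β*, λ*) globally minimizes the proximal cost over ℝ × [0,∞). -/
theorem stmt_2 (sβ sl β₀ l0 : ℝ) (hsβ : 0 < sβ) (hsl : 0 < sl)
    (hprod : sβ * sl < 1) (hl0 : 0 ≤ l0) :
    let F : ℝ → ℝ → ℝ := fun β lam =>
      lam * |β| + (β - β₀)^2 / (2*sβ) + (lam - l0)^2 / (2*sl)
    let lamstar : ℝ :=
      if |β₀| / sβ ≤ l0 then l0 else max (l0 - sl*|β₀|) 0 / (1 - sl*sβ)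
    let βstar : ℝ := max (|β₀| - sβ*lamstar) 0 * Real.sign β₀
    0 ≤ lamstar ∧ ∀ β lam : ℝ, 0 ≤ lam → F βstar lamstar ≤ F β lam := by
  intro F lamstar βstar
  have h1 : (0:ℝ) < 1 - sl*sβ := by nlinarith
  by_cases hcase : |β₀| / sβ ≤ l0
  · -- Case A : lamstar = l0, βstar = 0
    have hls : lamstar = l0 := if_pos hcase
    have hβb : |β₀| ≤ sβ * l0 := by
      rw [div_le_iff₀ hsβ] at hcase; linarith [hcase]
    have hβs : βstar = 0 := by
      show max (|β₀| - sβ*lamstar) 0 * Real.sign β₀ = 0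
      rw [hls, max_eq_right (by linarith), zero_mul]
    constructor
    · rw [hls]; exact hl0
    · intro β lam hlam
      have := key_prox sβ sl hsβ hsl hprod β₀ l0 0 l0 hl0
        (by simpa using hβb) (by simp) (by simp) (by simp) β lam hlam
      show lamstar * |βstar| + (βstar - β₀)^2 / (2*sβ) + (lamstar - l0)^2 / (2*sl) ≤ _
      rw [hβs, hls]
      simpa using this
  · -- Case B
    have hβb : sβ * l0 < |β₀| := by
      rw [not_le, lt_div_iff₀ hsβ] at hcase; linarith [hcase]
    have hlsdef : lamstar = max (l0 - sl*|β₀|) 0 / (1 - sl*sβ) := if_neg hcase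
    by_cases h2 : l0 - sl*|β₀| ≤ 0
    · -- B1 : lamstar = 0, βstar = β₀
      have hls : lamstar = 0 := by
        rw [hlsdef, max_eq_right h2, zero_div]
      have hβs : βstar = β₀ := by
        show max (|β₀| - sβ*lamstar) 0 * Real.sign β₀ = β₀
        rw [hls, mul_zero, sub_zero, max_eq_left (abs_nonneg _)]
        rcases lt_trichotomy β₀ 0 with h | h | h
        · rw [Real.sign_of_neg h, abs_of_neg h]; ring
        · simp [h]
        · rw [Real.sign_of_pos h, abs_of_pos h]; ring
      constructor
      · rw [hls]
      · intro β lam hlam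
        have := key_prox sβ sl hsβ hsl hprod β₀ l0 β₀ 0 le_rfl
          (by simp [hsβ.le]) (by simp) (by linarith) (by simp) β lam hlam
        show lamstar * |βstar| + (βstar - β₀)^2 / (2*sβ) + (lamstar - l0)^2 / (2*sl) ≤ _
        rw [hβs, hls]
        simpa using this
    · -- B2 : lamstar = (l0 - sl|β₀|)/(1-sl sβ) > 0
      push_neg at h2
      set L : ℝ := (l0 - sl*|β₀|) / (1 - sl*sβ) with hLdef
      have hls : lamstar = L := by
        rw [hlsdef, max_eq_left h2.le]
      have hL0 : 0 ≤ L := div_nonneg h2.le h1.le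
      have hm : (1 - sl*sβ) * (|β₀| - sβ*L) = |β₀| - sβ*l0 := by
        rw [hLdef]; field_simp; ring
      have hmpos : 0 < |β₀| - sβ*L := by nlinarith
      have heq : l0 - L = sl * (|β₀| - sβ*L) := by
        rw [hLdef]; field_simp; ring
      have hβ0 : β₀ ≠ 0 := by
        intro h; rw [h, abs_zero] at hβb; nlinarith
      set m : ℝ := |β₀| - sβ*L with hmdef
      have hβs : βstar = m * Real.sign β₀ := by
        show max (|β₀| - sβ*lamstar) 0 * Real.sign β₀ = m * Real.sign β₀
        rw [hls, max_eq_left hmpos.le]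
      have hsign : Real.sign β₀ = 1 ∨ Real.sign β₀ = -1 := by
        rcases lt_trichotomy β₀ 0 with h | h | h
        · right; exact Real.sign_of_neg h
        · exact absurd h hβ0
        · left; exact Real.sign_of_pos h
      have habs : |βstar| = m := by
        rw [hβs, abs_mul]
        rcases hsign with h | h <;> rw [h] <;> simp [abs_of_nonneg hmpos.le]
      have hdiff : β₀ - βstar = Real.sign β₀ * (sβ * L) := by
        rw [hβs]
        rcases lt_trichotomy β₀ 0 with h' | h' | h'
        · rw [Real.sign_of_neg h']
          rw [abs_of_neg h'] at hmdef
          rw [hmdef]; ring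
        · exact absurd h' hβ0
        · rw [Real.sign_of_pos h']
          rw [abs_of_pos h'] at hmdef
          rw [hmdef]; ring
      constructor
      · rw [hls]; exact hL0
      · intro β lam hlam
        have ha : |β₀ - βstar| ≤ sβ * L := by
          rw [hdiff, abs_mul]
          rcases hsign with h | h <;> rw [h] <;>
            simp [abs_of_nonneg (mul_nonneg hsβ.le hL0)]
        have hab : (β₀ - βstar) * βstar = sβ * L * |βstar| := by
          rw [hdiff, habs, hβs]
          rcases hsign with h | h <;> rw [h] <;> ring
        have hc : l0 - L ≤ sl * |βstar| := by rw [habs]; linarith [heq]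
        have hcomp : L * (sl * |βstar| - (l0 - L)) = 0 := by
          rw [habs, ← heq]; ring
        have := key_prox sβ sl hsβ hsl hprod β₀ l0 βstar L hL0
          ha hab hc hcomp β lam hlam
        show lamstar * |βstar| + (βstar - β₀)^2 / (2*sβ) + (lamstar - l0)^2 / (2*sl) ≤ _
        rw [hls]
        exact this
end

section
/- Let s_β, s_λ > 0 with s_β·s_λ ≥ 1, β₀ ∈ ℝ, λ₀ ≥ 0. Define λ* = λ₀ if λ₀/√s_λ > |β₀|/√s_β and λ* = 0 otherwise, and define β* = (|β₀| − s_β λ*)⁺ · sgn(β₀). Then (β*, λ*) is a global minimizer of the proximal cost F(β,λ) = λ|β| + (β−β₀)²/(2s_β) + (λ−λ₀)²/(2s_λ) over ℝ × [0,∞). -/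
lemma key1 (a c t l0 b L : ℝ) (ha : 0 < a) (hc : 0 < c)
    (hac : 1 ≤ a * c) (ht : 0 ≤ t) (hl0 : 0 ≤ l0) (hb : 0 ≤ b) (hL : 0 ≤ L)
    (hcond : c*t ≤ a*l0) :
    c^2 * t^2 ≤ 2*a^2*c^2*L*b + c^2*(b-t)^2 + a^2*(L-l0)^2 := by
  have hsq : c^2*t^2 ≤ a^2*l0^2 := by nlinarith [mul_nonneg hc.le ht, mul_nonneg ha.le hl0]
  rcases le_or_gt l0 (c^2*b) with h | h
  · nlinarith [mul_nonneg (mul_nonneg (mul_pos ha ha).le hL) (sub_nonneg.2 h), sq_nonneg (b-t), sq_nonneg L]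
  · have h2t : 2*c^2*t ≤ (a^2*c^2+1)*l0 := by
      nlinarith [mul_nonneg (mul_nonneg hl0 hc.le) (sub_nonneg.2 hac), mul_nonneg hc.le ht, sq_nonneg (a*c-1), mul_nonneg (mul_nonneg hc.le hl0) (sub_nonneg.2 hac)]
    have h1c : (0:ℝ) ≤ a^2*c^2 - 1 := by nlinarith [mul_pos ha hc]
    nlinarith [sq_nonneg (a*c*(L - (l0 - c^2*b))),
      mul_nonneg (mul_nonneg (mul_pos hc hc).le hb) (sub_nonneg.2 h2t),
      mul_nonneg (mul_nonneg (mul_nonneg (mul_pos hc hc).le hb) (sub_nonneg.2 h.le)) h1c,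
      mul_pos hc hc]

lemma key2 (a c t l0 b L : ℝ) (ha : 0 < a) (hc : 0 < c)
    (hac : 1 ≤ a * c) (ht : 0 ≤ t) (hl0 : 0 ≤ l0) (hb : 0 ≤ b) (hL : 0 ≤ L)
    (hcond : a*l0 ≤ c*t) :
    a^2 * l0^2 ≤ 2*a^2*c^2*L*b + c^2*(b-t)^2 + a^2*(L-l0)^2 := by
  nlinarith [sq_nonneg (a*L - c*(t-b)), mul_nonneg (mul_nonneg hL ha.le) (sub_nonneg.2 hcond),
    mul_nonneg (mul_nonneg (mul_nonneg (mul_nonneg hL ha.le) hc.le) hb) (sub_nonneg.2 hac)]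

lemma abs_sq_le (β β₀ : ℝ) : (|β| - |β₀|)^2 ≤ (β - β₀)^2 := by
  rw [← sq_abs (β - β₀)]
  apply sq_le_sq'
  · have := abs_sub_abs_le_abs_sub β₀ β
    rw [abs_sub_comm] at this; linarith
  · exact abs_sub_abs_le_abs_sub β β₀

/-- Closed form for the variable-penalty ℓ1 proximal operator when s_β s_λ ≥ 1:
the stated (β*, λ*) globally minimizes the proximal cost over ℝ × [0,∞). -/
theorem stmt_3 (sβ sl β₀ l0 : ℝ) (hsβ : 0 < sβ) (hsl : 0 < sl)
    (hprod : 1 ≤ sβ * sl) (hl0 : 0 ≤ l0) :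
    let F : ℝ → ℝ → ℝ := fun β lam =>
      lam * |β| + (β - β₀)^2 / (2*sβ) + (lam - l0)^2 / (2*sl)
    let lamstar : ℝ :=
      if |β₀| / Real.sqrt sβ < l0 / Real.sqrt sl then l0 else 0
    let βstar : ℝ := max (|β₀| - sβ*lamstar) 0 * Real.sign β₀
    0 ≤ lamstar ∧ ∀ β lam : ℝ, 0 ≤ lam → F βstar lamstar ≤ F β lam := by
  intro F lamstar βstar
  obtain ⟨a, ha, rfl⟩ : ∃ a, 0 < a ∧ sβ = a^2 :=
    ⟨Real.sqrt sβ, Real.sqrt_pos.2 hsβ, (Real.sq_sqrt hsβ.le).symm⟩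
  obtain ⟨c, hc, rfl⟩ : ∃ c, 0 < c ∧ sl = c^2 :=
    ⟨Real.sqrt sl, Real.sqrt_pos.2 hsl, (Real.sq_sqrt hsl.le).symm⟩
  have hac : 1 ≤ a * c := by
    nlinarith [mul_pos ha hc, sq_nonneg (a*c - 1), sq_nonneg (a*c + 1)]
  have hsqa : Real.sqrt (a^2) = a := Real.sqrt_sq ha.le
  have hsqc : Real.sqrt (c^2) = c := Real.sqrt_sq hc.le
  constructor
  · simp only [lamstar]
    split <;> simp [hl0]
  · intro β lam hlam
    have habs := abs_sq_le β β₀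
    by_cases hcnd : |β₀| / Real.sqrt (a^2) < l0 / Real.sqrt (c^2)
    · -- lamstar = l0, βstar = 0
      have hct : c * |β₀| < a * l0 := by
        rw [hsqa, hsqc, div_lt_div_iff₀ ha hc] at hcnd
        linarith [hcnd]
      have hls : lamstar = l0 := if_pos hcnd
      have hbs : βstar = 0 := by
        have : |β₀| - a^2 * lamstar ≤ 0 := by
          rw [hls]
          nlinarith [mul_nonneg ha.le hl0, mul_pos ha hc]
        simp only [βstar, max_eq_right this, zero_mul]
      have hkey := key1 a c |β₀| l0 |β| lam ha hc hac (abs_nonneg _) hl0 (abs_nonneg _) hlam hct.le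
      rw [hbs, hls]
      show l0 * |(0:ℝ)| + (0 - β₀)^2 / (2*a^2) + (l0 - l0)^2 / (2*c^2) ≤ _
      rw [← sub_nonneg]
      have expand : (lam * |β| + (β - β₀)^2 / (2*a^2) + (lam - l0)^2 / (2*c^2))
          - (l0 * |(0:ℝ)| + (0 - β₀)^2 / (2*a^2) + (l0 - l0)^2 / (2*c^2))
          = (2*a^2*c^2*lam*|β| + c^2*(β-β₀)^2 + a^2*(lam-l0)^2 - c^2*β₀^2) / (2*a^2*c^2) := by
        field_simp
        ring
      rw [expand]
      apply div_nonneg _ (by positivity)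
      have hb0 : |β₀|^2 = β₀^2 := sq_abs β₀
      nlinarith [hkey, habs, mul_pos hc hc, mul_nonneg (mul_pos hc hc).le (sub_nonneg.2 habs)]
    · -- lamstar = 0, βstar = β₀
      have hct : a * l0 ≤ c * |β₀| := by
        rw [not_lt, hsqa, hsqc, div_le_div_iff₀ hc ha] at hcnd
        linarith [hcnd]
      have hls : lamstar = 0 := if_neg hcnd
      have hbs : βstar = β₀ := by
        simp only [βstar, hls, mul_zero, sub_zero, max_eq_left (abs_nonneg β₀)]
        rcases lt_trichotomy β₀ 0 with h | h | h
        · rw [Real.sign_of_neg h, abs_of_neg h]; ring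
        · simp [h]
        · rw [Real.sign_of_pos h, abs_of_pos h]; ring
      have hkey := key2 a c |β₀| l0 |β| lam ha hc hac (abs_nonneg _) hl0 (abs_nonneg _) hlam hct
      rw [hbs, hls]
      show (0:ℝ) * |β₀| + (β₀ - β₀)^2 / (2*a^2) + ((0:ℝ) - l0)^2 / (2*c^2) ≤ _
      rw [← sub_nonneg]
      have expand : (lam * |β| + (β - β₀)^2 / (2*a^2) + (lam - l0)^2 / (2*c^2))
          - ((0:ℝ) * |β₀| + (β₀ - β₀)^2 / (2*a^2) + ((0:ℝ) - l0)^2 / (2*c^2))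
          = (2*a^2*c^2*lam*|β| + c^2*(β-β₀)^2 + a^2*(lam-l0)^2 - a^2*l0^2) / (2*a^2*c^2) := by
        field_simp
        ring
      rw [expand]
      apply div_nonneg _ (by positivity)
      nlinarith [hkey, habs, mul_nonneg (mul_pos hc hc).le (sub_nonneg.2 habs)]
end

section
/- Let s_β, s_λ > 0 with s_β·s_λ < 1, β₀ ∈ ℝ, λ₀ ≥ 0. Then the proximal cost F(β,λ) = λ|β| + (β−β₀)²/(2s_β) + (λ−λ₀)²/(2s_λ) has a unique global minimizer over ℝ × [0,∞). -/
lemma key_pos (sβ sl : ℝ) (hsβ : 0 < sβ) (hsl : 0 < sl) (hprod : sβ * sl < 1)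
    (x v u : ℝ) (hu : u^2 ≤ x^2) (hne : x ≠ 0 ∨ v ≠ 0) :
    0 < sl*x^2 + sβ*v^2 + 2*sβ*sl*u*v := by
  rcases eq_or_ne v 0 with hv | hv
  · subst hv
    have hx : x ≠ 0 := hne.resolve_right (by simp)
    have : 0 < x^2 := by positivity
    nlinarith
  · have hv2 : 0 < v^2 := by positivity
    nlinarith [mul_nonneg hsl.le (sq_nonneg (u + sβ*v)), mul_nonneg hsl.le (sub_nonneg.2 hu),
      mul_pos (mul_pos hsβ hv2) (sub_pos.2 hprod)]

lemma midpoint_strict (sβ sl β₀ l0 : ℝ) (hsβ : 0 < sβ) (hsl : 0 < sl)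
    (hprod : sβ * sl < 1) (a b c d : ℝ) (hc : 0 ≤ c) (hd : 0 ≤ d)
    (hne : a ≠ b ∨ c ≠ d) :
    ((c+d)/2) * |(a+b)/2| + ((a+b)/2 - β₀)^2 / (2*sβ) + ((c+d)/2 - l0)^2 / (2*sl)
      < ((c * |a| + (a - β₀)^2 / (2*sβ) + (c - l0)^2 / (2*sl))
        + (d * |b| + (b - β₀)^2 / (2*sβ) + (d - l0)^2 / (2*sl))) / 2 := by
  have hsβ' : sβ ≠ 0 := ne_of_gt hsβ
  have hsl' : sl ≠ 0 := ne_of_gt hsl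
  have habs : |(a+b)/2| ≤ (|a|+|b|)/2 := by
    calc |(a+b)/2| = |a+b|/2 := by rw [abs_div, abs_two]
    _ ≤ (|a|+|b|)/2 := by gcongr; exact abs_add_le a b
  have hcd : 0 ≤ (c+d)/2 := by linarith
  have h1 : ((c+d)/2) * |(a+b)/2| ≤ ((c+d)/2) * ((|a|+|b|)/2) :=
    mul_le_mul_of_nonneg_left habs hcd
  have hu : (|a| - |b|)^2 ≤ (a-b)^2 := by
    have := abs_abs_sub_abs_le_abs_sub a b
    nlinarith [abs_nonneg (a-b), sq_abs (a-b), abs_nonneg (|a|-|b|), sq_abs (|a|-|b|)]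
  have hkey := key_pos sβ sl hsβ hsl hprod (a-b) (c-d) (|a|-|b|) hu
    (by rcases hne with h | h
        · exact Or.inl (sub_ne_zero.2 h)
        · exact Or.inr (sub_ne_zero.2 h))
  -- quadratic identities
  have e1 : ((a+b)/2 - β₀)^2 / (2*sβ)
      = ((a-β₀)^2 + (b-β₀)^2) / (4*sβ) - (a-b)^2 / (8*sβ) := by
    field_simp
    ring_nf
    try tauto
  have e2 : ((c+d)/2 - l0)^2 / (2*sl)
      = ((c-l0)^2 + (d-l0)^2) / (4*sl) - (c-d)^2 / (8*sl) := by
    field_simp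
    ring_nf
    try tauto
  rw [e1, e2]
  have hA : 0 < ((a-b)^2 / (8*sβ) + (c-d)^2 / (8*sl)) + (c-d)*(|a|-|b|)/4 := by
    have h8 : (0:ℝ) < 8*sβ*sl := by positivity
    rw [div_add_div _ _ (by positivity : (8*sβ:ℝ) ≠ 0) (by positivity : (8*sl:ℝ) ≠ 0)]
    have : ((a-b)^2 * (8*sl) + (8*sβ) * (c-d)^2) / (8*sβ*(8*sl)) + (c-d)*(|a|-|b|)/4
        = (sl*(a-b)^2 + sβ*(c-d)^2 + 2*sβ*sl*(|a|-|b|)*(c-d)) / (8*sβ*sl) := by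
      field_simp; ring
    rw [this]
    exact div_pos (by nlinarith [hkey]) h8
  have hid : ((c+d)/2) * ((|a|+|b|)/2) = (c*|a| + d*|b|)/2 - (c-d)*(|a|-|b|)/4 := by ring
  have e3 : ((a-β₀)^2 + (b-β₀)^2) / (4*sβ) = ((a-β₀)^2/(2*sβ) + (b-β₀)^2/(2*sβ))/2 := by
    field_simp
    ring_nf
    try tauto
  have e4 : ((c-l0)^2 + (d-l0)^2) / (4*sl) = ((c-l0)^2/(2*sl) + (d-l0)^2/(2*sl))/2 := by
    field_simp
    ring_nf
    try tauto
  linarith [h1, hA]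



/-- When s_β s_λ < 1, the variable-penalty ℓ1 proximal cost has a unique global
minimizer over ℝ × [0,∞). -/
theorem stmt_4 (sβ sl β₀ l0 : ℝ) (hsβ : 0 < sβ) (hsl : 0 < sl)
    (hprod : sβ * sl < 1) (hl0 : 0 ≤ l0) :
    ∃! p : ℝ × ℝ, 0 ≤ p.2 ∧ ∀ β lam : ℝ, 0 ≤ lam →
      p.2 * |p.1| + (p.1 - β₀)^2 / (2*sβ) + (p.2 - l0)^2 / (2*sl) ≤
        lam * |β| + (β - β₀)^2 / (2*sβ) + (lam - l0)^2 / (2*sl) := by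
  set F : ℝ × ℝ → ℝ := fun p =>
    p.2 * |p.1| + (p.1 - β₀)^2 / (2*sβ) + (p.2 - l0)^2 / (2*sl) with hF
  have hFcont : Continuous F := by
    apply Continuous.add
    apply Continuous.add
    · exact continuous_snd.mul (continuous_fst.abs)
    · exact ((continuous_fst.sub continuous_const).pow 2).div_const _
    · exact ((continuous_snd.sub continuous_const).pow 2).div_const _
  set C : ℝ := F (β₀, l0) with hC
  set S : Set (ℝ × ℝ) := {p | 0 ≤ p.2} ∩ F ⁻¹' Set.Iic C with hS
  have hmem : (β₀, l0) ∈ S := ⟨hl0, by simp [Set.mem_preimage, hC]⟩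
  -- bounds on S
  have hbound : ∀ p ∈ S, p ∈ Set.Icc (β₀ - (2*sβ*C+1)) (β₀ + (2*sβ*C+1)) ×ˢ
      Set.Icc (l0 - (2*sl*C+1)) (l0 + (2*sl*C+1)) := by
    rintro p ⟨h2, hFp⟩
    simp only [Set.mem_preimage, Set.mem_Iic] at hFp
    have habs : 0 ≤ p.2 * |p.1| := mul_nonneg h2 (abs_nonneg _)
    have hq1 : 0 ≤ (p.1 - β₀)^2 / (2*sβ) := by positivity
    have hq2 : 0 ≤ (p.2 - l0)^2 / (2*sl) := by positivity
    have hb1 : (p.1 - β₀)^2 ≤ 2*sβ*C := by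
      have : (p.1 - β₀)^2 / (2*sβ) ≤ C := by
        simp only [hF] at hFp; linarith
      calc (p.1 - β₀)^2 = ((p.1 - β₀)^2 / (2*sβ)) * (2*sβ) := by field_simp
      _ ≤ C * (2*sβ) := by apply mul_le_mul_of_nonneg_right this; positivity
      _ = 2*sβ*C := by ring
    have hb2 : (p.2 - l0)^2 ≤ 2*sl*C := by
      have : (p.2 - l0)^2 / (2*sl) ≤ C := by
        simp only [hF] at hFp; linarith
      calc (p.2 - l0)^2 = ((p.2 - l0)^2 / (2*sl)) * (2*sl) := by field_simp
      _ ≤ C * (2*sl) := by apply mul_le_mul_of_nonneg_right this; positivity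
      _ = 2*sl*C := by ring
    constructor
    · constructor <;> nlinarith [sq_nonneg (p.1 - β₀ - 1), sq_nonneg (p.1 - β₀ + 1)]
    · constructor <;> nlinarith [sq_nonneg (p.2 - l0 - 1), sq_nonneg (p.2 - l0 + 1)]
  have hSclosed : IsClosed S :=
    (isClosed_le continuous_const continuous_snd).inter (isClosed_Iic.preimage hFcont)
  have hScompact : IsCompact S :=
    ((isCompact_Icc.prod isCompact_Icc).of_isClosed_subset hSclosed hbound)
  obtain ⟨p, hpS, hpmin⟩ := hScompact.exists_isMinOn ⟨(β₀, l0), hmem⟩ hFcont.continuousOn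
  have hglobal : ∀ β lam : ℝ, 0 ≤ lam → F p ≤ F (β, lam) := by
    intro β lam hlam
    by_cases h : F (β, lam) ≤ C
    · exact hpmin ⟨hlam, h⟩
    · have : F p ≤ C := hpS.2
      linarith [not_le.1 h]
  refine ⟨p, ⟨hpS.1, hglobal⟩, ?_⟩
  rintro q ⟨hq2, hqmin⟩
  by_contra hne
  have hFpq : F p = F q := le_antisymm (hglobal q.1 q.2 hq2) (by
    have := hqmin p.1 p.2 hpS.1
    simpa [hF] using this)
  set m : ℝ × ℝ := ((q.1 + p.1)/2, (q.2 + p.2)/2) with hm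
  have hp2 : 0 ≤ p.2 := hpS.1
  have hm2 : 0 ≤ m.2 := by
    show 0 ≤ (q.2 + p.2)/2
    linarith
  have hmid : F m < (F q + F p)/2 := by
    have hne' : q.1 ≠ p.1 ∨ q.2 ≠ p.2 := by
      by_contra h
      push_neg at h
      exact hne (Prod.ext h.1 h.2)
    exact midpoint_strict sβ sl β₀ l0 hsβ hsl hprod q.1 p.1 q.2 p.2 hq2 hpS.1 hne'
  have hqm := hqmin m.1 m.2 hm2
  simp only [hF] at hqm hmid hFpq
  have : F q ≤ F m := by simpa [hF] using hqm
  simp only [hF] at this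
  linarith
end

section
/- Let s_β, s_λ > 0 with s_β·s_λ < 1, β₀ ∈ ℝ, λ₀ ∈ ℝ. Then the marginal proximal cost m(λ) = inf over β ∈ ℝ of [λ|β| + (β−β₀)²/(2s_β) + (λ−λ₀)²/(2s_λ)] is a convex function of λ on [0,∞). -/
lemma key_aux (sβ sl β₀ l0 a b x y p q : ℝ) (hsβ : 0 < sβ) (hsl : 0 < sl)
    (hprod : sβ * sl < 1) (hx : 0 ≤ x) (hy : 0 ≤ y)
    (ha : 0 ≤ a) (hb : 0 ≤ b) (hab : a + b = 1) :
    (a*x+b*y) * |a*p+b*q| + (a*p+b*q - β₀)^2 / (2*sβ) + (a*x+b*y - l0)^2 / (2*sl)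
      ≤ a * (x * |p| + (p - β₀)^2 / (2*sβ) + (x - l0)^2 / (2*sl))
        + b * (y * |q| + (q - β₀)^2 / (2*sβ) + (y - l0)^2 / (2*sl)) := by
  have hb' : b = 1 - a := by linarith
  subst hb'
  have hA : 0 ≤ |p| := abs_nonneg _
  have hB : 0 ≤ |q| := abs_nonneg _
  have hC : |a*p+(1-a)*q| ≤ a*|p| + (1-a)*|q| := by
    calc |a*p+(1-a)*q| ≤ |a*p| + |(1-a)*q| := abs_add_le _ _
    _ = a*|p| + (1-a)*|q| := by rw [abs_mul, abs_mul, abs_of_nonneg ha, abs_of_nonneg hb]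
  have hAB : |p| * |q| ≥ p * q := by
    rw [← abs_mul]; exact le_abs_self _
  have hA2 : |p|^2 = p^2 := sq_abs p
  have hB2 : |q|^2 = q^2 := sq_abs q
  set A := |p|; set B := |q|
  have h1 : (a*x+(1-a)*y) * |a*p+(1-a)*q| ≤ (a*x+(1-a)*y) * (a*A + (1-a)*B) := by
    apply mul_le_mul_of_nonneg_left hC
    positivity
  have h4 : (A-B)^2 ≤ (p-q)^2 := by nlinarith [hAB, hA2, hB2]
  have key : 0 ≤ a*(1-a)*( (x-y)*(A-B)*(2*sβ*sl) + sl*(p-q)^2 + sβ*(x-y)^2 ) := by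
    apply mul_nonneg (mul_nonneg ha hb)
    nlinarith [mul_nonneg hsβ.le (sq_nonneg ((x-y)+sl*(A-B))),
      mul_le_mul_of_nonneg_left h4 hsl.le,
      mul_nonneg (mul_nonneg hsl.le (sub_nonneg.2 hprod.le)) (sq_nonneg (A-B))]
  have hmain : (a*x+(1-a)*y) * (a*A + (1-a)*B) + (a*p+(1-a)*q - β₀)^2 / (2*sβ) + (a*x+(1-a)*y - l0)^2 / (2*sl)
      ≤ a * (x * A + (p - β₀)^2 / (2*sβ) + (x - l0)^2 / (2*sl))
        + (1-a) * (y * B + (q - β₀)^2 / (2*sβ) + (y - l0)^2 / (2*sl)) := by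
    rw [← sub_nonneg]
    have expand : a * (x * A + (p - β₀) ^ 2 / (2 * sβ) + (x - l0) ^ 2 / (2 * sl)) +
      (1-a) * (y * B + (q - β₀) ^ 2 / (2 * sβ) + (y - l0) ^ 2 / (2 * sl)) -
      ((a * x + (1-a) * y) * (a * A + (1-a) * B) + (a * p + (1-a) * q - β₀) ^ 2 / (2 * sβ) +
        (a * x + (1-a) * y - l0) ^ 2 / (2 * sl))
      = (a*(1-a)*( (x-y)*(A-B)*(2*sβ*sl) + sl*(p-q)^2 + sβ*(x-y)^2 )) / (2*sβ*sl) := by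
      field_simp
      ring
    rw [expand]
    positivity
  linarith

/-- When s_β s_λ < 1, the marginal (profiled over β) proximal cost is convex in λ on [0,∞). -/
theorem stmt_5 (sβ sl β₀ l0 : ℝ) (hsβ : 0 < sβ) (hsl : 0 < sl)
    (hprod : sβ * sl < 1) :
    ConvexOn ℝ (Set.Ici (0:ℝ))
      (fun lam => ⨅ β : ℝ, (lam * |β| + (β - β₀)^2 / (2*sβ) + (lam - l0)^2 / (2*sl))) := by
  set f : ℝ → ℝ → ℝ := fun lam β => lam * |β| + (β - β₀)^2 / (2*sβ) + (lam - l0)^2 / (2*sl)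
    with hf
  have hnn : ∀ lam : ℝ, 0 ≤ lam → ∀ β : ℝ, 0 ≤ f lam β := by
    intro lam hlam β
    have : 0 ≤ lam * |β| := mul_nonneg hlam (abs_nonneg _)
    have h1 : 0 ≤ (β - β₀)^2 / (2*sβ) := by positivity
    have h2 : 0 ≤ (lam - l0)^2 / (2*sl) := by positivity
    simp only [hf]; linarith
  have hbdd : ∀ lam : ℝ, 0 ≤ lam → BddBelow (Set.range (f lam)) := by
    intro lam hlam
    exact ⟨0, by rintro _ ⟨β, rfl⟩; exact hnn lam hlam β⟩
  refine ⟨convex_Ici 0, ?_⟩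
  intro x hx y hy a b ha hb hab
  simp only [smul_eq_mul]
  show (⨅ β : ℝ, f (a*x+b*y) β) ≤ a * (⨅ β : ℝ, f x β) + b * (⨅ β : ℝ, f y β)
  have hx' : (0:ℝ) ≤ x := hx
  have hy' : (0:ℝ) ≤ y := hy
  have hxy : (0:ℝ) ≤ a*x + b*y := by positivity
  refine le_of_forall_pos_le_add ?_
  intro ε hε
  have hεa : (⨅ β : ℝ, f x β) < (⨅ β : ℝ, f x β) + ε/2 := by linarith
  have hεb : (⨅ β : ℝ, f y β) < (⨅ β : ℝ, f y β) + ε/2 := by linarith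
  obtain ⟨p, hp⟩ := exists_lt_of_ciInf_lt hεa
  obtain ⟨q, hq⟩ := exists_lt_of_ciInf_lt hεb
  have step1 : (⨅ β : ℝ, f (a*x+b*y) β) ≤ f (a*x+b*y) (a*p+b*q) :=
    ciInf_le (hbdd _ hxy) _
  have step2 : f (a*x+b*y) (a*p+b*q) ≤ a * f x p + b * f y q :=
    key_aux sβ sl β₀ l0 a b x y p q hsβ hsl hprod hx' hy' ha hb hab
  have step3 : a * f x p + b * f y q
      ≤ a * ((⨅ β : ℝ, f x β) + ε/2) + b * ((⨅ β : ℝ, f y β) + ε/2) := by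
    have := mul_le_mul_of_nonneg_left hp.le ha
    have := mul_le_mul_of_nonneg_left hq.le hb
    linarith
  have : a * ((⨅ β : ℝ, f x β) + ε/2) + b * ((⨅ β : ℝ, f y β) + ε/2)
      = a * (⨅ β : ℝ, f x β) + b * (⨅ β : ℝ, f y β) + ε/2 := by
    have hb' : b = 1 - a := by linarith
    subst hb'
    ring
  have h5 := step1.trans (step2.trans step3)
  rw [this] at h5
  linarith
end

section
/- Let s_β, s_λ > 0 with s_β·s_λ > 1, β₀ ∈ ℝ with β₀ ≠ 0, and λ₀ ∈ ℝ. Then the marginal proximal cost m(λ) = inf over β ∈ ℝ of [λ|β| + (β−β₀)²/(2s_β) + (λ−λ₀)²/(2s_λ)] is not a convex function of λ on [0,∞). -/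
lemma inf_eval (sβ C lam β₀ : ℝ) (hsβ : 0 < sβ) (hβ₀ : β₀ ≠ 0)
    (hl0 : 0 ≤ lam) (hlT : lam ≤ |β₀| / sβ) :
    (⨅ β : ℝ, (lam * |β| + (β - β₀)^2 / (2*sβ) + C))
      = lam * |β₀| - sβ * lam^2 / 2 + C := by
  set a := |β₀| with ha
  have ha0 : 0 < a := abs_pos.mpr hβ₀
  have hlb : ∀ β : ℝ, lam * a - sβ * lam^2 / 2 + C ≤ lam * |β| + (β - β₀)^2 / (2*sβ) + C := by
    intro β
    have h1 : a ≤ |β| + |β - β₀| := by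
      calc a = |β + (β₀ - β)| := by rw [ha]; ring_nf
        _ ≤ |β| + |β₀ - β| := abs_add_le _ _
        _ = |β| + |β - β₀| := by rw [abs_sub_comm]
    set y := |β - β₀| with hy
    have hy0 : 0 ≤ y := abs_nonneg _
    have hy2 : y^2 = (β - β₀)^2 := sq_abs _
    have hkey : lam * y - sβ * lam^2 / 2 ≤ (β - β₀)^2 / (2*sβ) := by
      rw [le_div_iff₀ (by positivity)]
      nlinarith [sq_nonneg (y - sβ*lam)]
    nlinarith [abs_nonneg β, mul_nonneg hl0 hy0]
  have hbdd : BddBelow (Set.range fun β : ℝ =>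
      lam * |β| + (β - β₀)^2 / (2*sβ) + C) :=
    ⟨lam * a - sβ * lam^2 / 2 + C, by rintro _ ⟨β, rfl⟩; exact hlb β⟩
  refine le_antisymm ?_ (le_ciInf hlb)
  have hc : 0 ≤ 1 - sβ * lam / a := by
    rw [sub_nonneg, div_le_one ha0]
    rw [le_div_iff₀ hsβ] at hlT
    linarith [hlT]
  have habs : |(1 - sβ * lam / a) * β₀| = (1 - sβ * lam / a) * a := by
    rw [abs_mul, abs_of_nonneg hc]
  have hsq : ((1 - sβ * lam / a) * β₀ - β₀)^2 = sβ^2 * lam^2 := by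
    have hb2 : β₀^2 = a^2 := (sq_abs β₀).symm
    have hrw : (1 - sβ * lam / a) * β₀ - β₀ = -(sβ * lam / a) * β₀ := by ring
    rw [hrw]
    field_simp
    linear_combination lam^2 * hb2
  have hub : lam * |(1 - sβ * lam / a) * β₀|
      + ((1 - sβ * lam / a) * β₀ - β₀)^2 / (2*sβ) + C
      = lam * a - sβ * lam^2 / 2 + C := by
    rw [habs, hsq]
    field_simp
    ring
  calc (⨅ β : ℝ, (lam * |β| + (β - β₀)^2 / (2*sβ) + C))
      ≤ _ := ciInf_le hbdd ((1 - sβ * lam / a) * β₀)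
    _ = _ := hub

/-- When s_β s_λ > 1 and β₀ ≠ 0, the marginal (profiled over β) proximal cost is
not convex in λ on [0,∞). -/
theorem stmt_6 (sβ sl β₀ l0 : ℝ) (hsβ : 0 < sβ) (hsl : 0 < sl)
    (hprod : 1 < sβ * sl) (hβ₀ : β₀ ≠ 0) :
    ¬ ConvexOn ℝ (Set.Ici (0:ℝ))
      (fun lam => ⨅ β : ℝ, (lam * |β| + (β - β₀)^2 / (2*sβ) + (lam - l0)^2 / (2*sl))) := by
  intro hconv
  set a := |β₀| with ha
  have ha0 : 0 < a := abs_pos.mpr hβ₀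
  set T := a / sβ with hT
  have hT0 : 0 < T := by positivity
  have hmid := hconv.2 (Set.mem_Ici.mpr le_rfl) (Set.mem_Ici.mpr hT0.le)
    (by norm_num : (0:ℝ) ≤ 1/2) (by norm_num : (0:ℝ) ≤ 1/2) (by norm_num)
  simp only [smul_eq_mul] at hmid
  have e0 := inf_eval sβ ((0 - l0)^2 / (2*sl)) 0 β₀ hsβ hβ₀ le_rfl (by positivity)
  have eT := inf_eval sβ ((T - l0)^2 / (2*sl)) T β₀ hsβ hβ₀ hT0.le le_rfl
  have em := inf_eval sβ ((1/2 * 0 + 1/2 * T - l0)^2 / (2*sl)) (1/2 * 0 + 1/2 * T) β₀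
    hsβ hβ₀ (by linarith) (by rw [← hT]; linarith)
  rw [e0, eT, em] at hmid
  have ha2 : |β₀| = sβ * T := by rw [hT]; field_simp; rw [ha]
  rw [ha2] at hmid
  field_simp at hmid
  nlinarith [hmid, mul_pos (mul_pos hT0 hT0) (sub_pos.mpr hprod), hsl, hT0, hsβ,
    mul_pos hsl (mul_pos (mul_pos hT0 hT0) (sub_pos.mpr hprod)),
    mul_pos (mul_pos hsl hsl) (mul_pos (mul_pos hT0 hT0) (sub_pos.mpr hprod))]
end

section
/- Let s_β, s_λ > 0 with s_β·s_λ < 1, β₀ ∈ ℝ, and λ₀ ≥ 0 with λ₀ < s_λ|β₀|. Then (β₀, 0) is a global minimizer of the proximal cost F(β,λ) = λ|β| + (β−β₀)²/(2s_β) + (λ−λ₀)²/(2s_λ) over ℝ × [0,∞); that is, the optimizing penalty coefficient is λ* = 0 and the optimizing β* = β₀ is not shrunk at all. -/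
/-- Dual sparsity: when s_β s_λ < 1 and l0 < s_λ|β₀|, the point (β₀, 0) globally
minimizes the proximal cost over ℝ × [0,∞): λ* = 0 and β* = β₀ is not shrunk. -/
theorem stmt_8 (sβ sl β₀ l0 : ℝ) (hsβ : 0 < sβ) (hsl : 0 < sl)
    (hprod : sβ * sl < 1) (hl0 : 0 ≤ l0) (hsmall : l0 < sl * |β₀|) :
    ∀ β lam : ℝ, 0 ≤ lam →
      (0:ℝ) * |β₀| + (β₀ - β₀)^2 / (2*sβ) + ((0:ℝ) - l0)^2 / (2*sl) ≤
        lam * |β| + (β - β₀)^2 / (2*sβ) + (lam - l0)^2 / (2*sl) := by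
  intro β lam hlam
  have hd : |β₀| ≤ |β| + |β - β₀| := by
    have h1 := abs_sub_abs_le_abs_sub β₀ β
    have h2 := abs_sub_comm β₀ β
    linarith [le_of_eq h2.symm]
  have h2 : lam * l0 ≤ lam * (sl * |β₀|) := mul_le_mul_of_nonneg_left hsmall.le hlam
  have hsq : (β - β₀)^2 = |β - β₀|^2 := (sq_abs _).symm
  have e1 : (β - β₀)^2 / (2*sβ) * (2*sβ) = (β - β₀)^2 :=
    div_mul_cancel₀ _ (by positivity)
  have e2 : (lam - l0)^2 / (2*sl) * (2*sl) = (lam - l0)^2 :=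
    div_mul_cancel₀ _ (by positivity)
  have e3 : ((0:ℝ) - l0)^2 / (2*sl) * (2*sl) = ((0:ℝ) - l0)^2 :=
    div_mul_cancel₀ _ (by positivity)
  have e0 : (β₀ - β₀)^2 / (2*sβ) = 0 := by simp
  have key : 0 ≤ lam * |β| * (2*sβ*sl) + (β - β₀)^2 * sl + (lam - l0)^2 * sβ
      - ((0:ℝ) - l0)^2 * sβ := by
    nlinarith [mul_nonneg hsl.le (sq_nonneg (|β - β₀| - sβ*lam)),
      mul_nonneg (mul_nonneg hsβ.le (sq_nonneg lam)) (sub_nonneg.2 hprod.le),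
      mul_le_mul_of_nonneg_left h2 hsβ.le,
      mul_le_mul_of_nonneg_left hd (mul_nonneg (mul_nonneg hlam hsβ.le) hsl.le),
      abs_nonneg β, abs_nonneg (β - β₀), hsq]
  have hpos : (0:ℝ) < 2*sβ*sl := by positivity
  rw [e0]
  nlinarith [key, e1, e2, e3, hpos]
end

section
/- Let a, s_β, s_λ > 0, β₀ ∈ ℝ, λ₀ ∈ ℝ, and set λ* = (λ₀ + √(λ₀² + 4 s_λ a))/2. If 2|β₀| ≤ s_β(λ₀ + √(λ₀² + 4 s_λ a)), then the point (0, λ*) is a coordinatewise minimizer of the P2 objective G(β,λ) = λ|β| + (β−β₀)²/(2s_β) + (λ−λ₀)²/(2s_λ) − a·log λ: namely, G(0, λ*) ≤ G(β, λ*) for all β ∈ ℝ, and G(0, λ*) ≤ G(0, λ) for all λ > 0. -/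
/-- If 2|β₀| ≤ s_β(l0 + √(l0² + 4s_λa)), the point (0, λ*) with
λ* = (l0 + √(l0² + 4s_λa))/2 is a coordinatewise minimizer of the P2 objective. -/
theorem stmt_11 (a sβ sl β₀ l0 : ℝ) (ha : 0 < a) (hsβ : 0 < sβ) (hsl : 0 < sl)
    (hcond : 2*|β₀| ≤ sβ * (l0 + Real.sqrt (l0^2 + 4*sl*a))) :
    let lamstar : ℝ := (l0 + Real.sqrt (l0^2 + 4*sl*a)) / 2
    let G : ℝ → ℝ → ℝ := fun β lam =>
      lam * |β| + (β - β₀)^2 / (2*sβ) + (lam - l0)^2 / (2*sl) - a * Real.log lam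
    (∀ β : ℝ, G 0 lamstar ≤ G β lamstar) ∧
    (∀ lam : ℝ, 0 < lam → G 0 lamstar ≤ G 0 lam) := by
  intro lamstar G
  set s : ℝ := Real.sqrt (l0^2 + 4*sl*a) with hs
  have hs2 : s^2 = l0^2 + 4*sl*a := Real.sq_sqrt (by nlinarith)
  have habs : |l0| < s := by
    have h1 : Real.sqrt (l0^2) < Real.sqrt (l0^2 + 4*sl*a) :=
      Real.sqrt_lt_sqrt (sq_nonneg l0) (by nlinarith)
    rwa [Real.sqrt_sq_eq_abs] at h1
  have hl : 0 < lamstar := by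
    have := neg_abs_le l0
    simp only [lamstar]
    linarith
  have hq : lamstar^2 - l0*lamstar - sl*a = 0 := by
    simp only [lamstar]
    nlinarith [hs2]
  have h2sβ : (0:ℝ) < 2*sβ := by linarith
  constructor
  · intro β
    simp only [G, abs_zero, mul_zero, zero_sub, neg_sq, zero_add]
    have hbb : β * β₀ ≤ |β| * |β₀| := by
      calc β * β₀ ≤ |β * β₀| := le_abs_self _
        _ = |β| * |β₀| := abs_mul β β₀
    have hcond' : |β₀| ≤ sβ * lamstar := by
      simp only [lamstar]; linarith
    have key : (0:ℝ) ≤ 2*sβ*(lamstar*|β|) + (β-β₀)^2 - β₀^2 := by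
      nlinarith [sq_nonneg β, hbb, mul_le_mul_of_nonneg_left hcond' (abs_nonneg β)]
    have heq : lamstar*|β| + (β-β₀)^2/(2*sβ) - β₀^2/(2*sβ)
        = (2*sβ*(lamstar*|β|) + (β-β₀)^2 - β₀^2)/(2*sβ) := by
      field_simp
    have hfrac : β₀^2/(2*sβ) ≤ lamstar*|β| + (β-β₀)^2/(2*sβ) := by
      rw [← sub_nonneg, heq]; exact div_nonneg key h2sβ.le
    linarith
  · intro lam hlam
    simp only [G, abs_zero, mul_zero, zero_sub, neg_sq, zero_add]
    have hlog : Real.log lam - Real.log lamstar ≤ lam/lamstar - 1 := by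
      rw [← Real.log_div (ne_of_gt hlam) (ne_of_gt hl)]
      exact Real.log_le_sub_one_of_pos (div_pos hlam hl)
    have h1 : a*(Real.log lam - Real.log lamstar) ≤ a*(lam/lamstar - 1) :=
      mul_le_mul_of_nonneg_left hlog ha.le
    have h2 : a*(lam/lamstar - 1) ≤ ((lam-l0)^2 - (lamstar-l0)^2)/(2*sl) := by
      rw [← sub_nonneg]
      have heq : ((lam-l0)^2 - (lamstar-l0)^2)/(2*sl) - a*(lam/lamstar - 1)
          = (lamstar*((lam-l0)^2-(lamstar-l0)^2) - 2*sl*a*(lam-lamstar))/(2*sl*lamstar) := by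
        field_simp
      rw [heq]
      apply div_nonneg
      · nlinarith [sq_nonneg (lam-lamstar), hq]
      · positivity
    have h3 : ((lam-l0)^2 - (lamstar-l0)^2)/(2*sl)
        = (lam-l0)^2/(2*sl) - (lamstar-l0)^2/(2*sl) := by ring
    linarith [h1, h2]
end

section
/- Let a, s_β, s_λ > 0 with s_β·s_λ ≠ 1, β₀ ∈ ℝ, λ₀ ∈ ℝ. Suppose (β, λ) with β ≠ 0 and λ > 0 satisfies the stationarity conditions of the P2 objective: λ·sgn(β) + (β−β₀)/s_β = 0 and |β| + (λ−λ₀)/s_λ − a/λ = 0. Then λ satisfies the quadratic equation (1 − s_β s_λ)λ² + (s_λ|β₀| − λ₀)λ − s_λ a = 0; equivalently, λ = [s_λ|β₀| − λ₀ ± √((λ₀ − s_λ|β₀|)² + 4(1 − s_β s_λ) s_λ a)] / (2(s_β s_λ − 1)). -/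
/-- Any stationary point of the P2 objective with β ≠ 0 has λ satisfying the quadratic
(1 − s_βs_λ)λ² + (s_λ|β₀| − l0)λ − s_λa = 0, equivalently the quadratic-formula form. -/
theorem stmt_12 (a sβ sl β₀ l0 β lam : ℝ) (ha : 0 < a) (hsβ : 0 < sβ) (hsl : 0 < sl)
    (hne : sβ * sl ≠ 1) (hβ : β ≠ 0) (hlam : 0 < lam)
    (hstat1 : lam * Real.sign β + (β - β₀) / sβ = 0)
    (hstat2 : |β| + (lam - l0) / sl - a / lam = 0) :
    (1 - sβ*sl) * lam^2 + (sl*|β₀| - l0) * lam - sl*a = 0 ∧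
    (lam = (sl*|β₀| - l0 + Real.sqrt ((l0 - sl*|β₀|)^2 + 4*(1 - sβ*sl)*sl*a))
            / (2*(sβ*sl - 1)) ∨
     lam = (sl*|β₀| - l0 - Real.sqrt ((l0 - sl*|β₀|)^2 + 4*(1 - sβ*sl)*sl*a))
            / (2*(sβ*sl - 1))) := by
  -- Step 1: |β| = |β₀| - sβ * lam
  have habs : |β| = |β₀| - sβ * lam := by
    rcases lt_or_gt_of_ne hβ with hneg | hpos
    · rw [Real.sign_of_neg hneg] at hstat1
      have hb0 : β₀ = β - sβ * lam := by
        field_simp at hstat1; linarith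
      have hb0neg : β₀ < 0 := by nlinarith
      rw [abs_of_neg hneg, abs_of_neg hb0neg, hb0]; ring
    · rw [Real.sign_of_pos hpos] at hstat1
      have hb0 : β₀ = β + sβ * lam := by
        field_simp at hstat1; linarith
      have hb0pos : 0 < β₀ := by nlinarith
      rw [abs_of_pos hpos, abs_of_pos hb0pos, hb0]; ring
  -- Step 2: the quadratic
  have hq : (1 - sβ*sl) * lam^2 + (sl*|β₀| - l0) * lam - sl*a = 0 := by
    rw [habs] at hstat2
    field_simp at hstat2
    nlinarith [hstat2]
  refine ⟨hq, ?_⟩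
  have hA : (1 - sβ*sl) ≠ 0 := by
    intro h; apply hne; linarith
  have hD : (l0 - sl*|β₀|)^2 + 4*(1 - sβ*sl)*sl*a
      = (2*(1 - sβ*sl)*lam + (sl*|β₀| - l0))^2 := by
    linear_combination (-4*(1 - sβ*sl)) * hq
  rw [hD, Real.sqrt_sq_eq_abs]
  rcases le_or_gt 0 (2*(1 - sβ*sl)*lam + (sl*|β₀| - l0)) with hpos | hneg
  · right
    rw [abs_of_nonneg hpos, eq_div_iff (by intro h; apply hA; linarith : (2*(sβ*sl-1)) ≠ 0)]
    ring
  · left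
    rw [abs_of_neg hneg, eq_div_iff (by intro h; apply hA; linarith : (2*(sβ*sl-1)) ≠ 0)]
    ring
end

section
/- Let τ > 0, let ρ : (0,∞) → ℝ be twice differentiable, and let λ* : [0,∞) → (0,∞) be a differentiable function satisfying the stationarity identity λ*(t)·(τt + ρ'(λ*(t))) = 1 for all t ≥ 0, with 1/λ*(t)² + ρ''(λ*(t)) ≠ 0. Define g(t) = τ·λ*(t)·t − log λ*(t) + ρ(λ*(t)). Then g is twice differentiable with g''(t) = −τ² / ((τt + ρ'(λ*(t)))² + ρ''(λ*(t))). -/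
/-- Second derivative of the profiled penalty:
g''(t) = −τ² / ((τt + ρ'(λ*(t)))² + ρ''(λ*(t))). -/
theorem stmt_17 (τ : ℝ) (hτ : 0 < τ) (ρ lam : ℝ → ℝ)
    (hρ1 : ∀ x : ℝ, 0 < x → DifferentiableAt ℝ ρ x)
    (hρ2 : ∀ x : ℝ, 0 < x → DifferentiableAt ℝ (deriv ρ) x)
    (hlampos : ∀ t : ℝ, 0 ≤ t → 0 < lam t)
    (hlamdiff : ∀ t : ℝ, 0 ≤ t → DifferentiableAt ℝ lam t)
    (hstat : ∀ t : ℝ, 0 ≤ t → lam t * (τ*t + deriv ρ (lam t)) = 1)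
    (hnz : ∀ t : ℝ, 0 ≤ t → 1/(lam t)^2 + deriv (deriv ρ) (lam t) ≠ 0) :
    let g : ℝ → ℝ := fun s => τ * lam s * s - Real.log (lam s) + ρ (lam s)
    ∀ t : ℝ, 0 < t → DifferentiableAt ℝ g t ∧
      HasDerivAt (deriv g)
        (-τ^2 / ((τ*t + deriv ρ (lam t))^2 + deriv (deriv ρ) (lam t))) t := by
  intro g t ht
  -- envelope: g has derivative τ * lam s at every s ≥ 0
  have hgd : ∀ s : ℝ, 0 ≤ s → HasDerivAt g (τ * lam s) s := by
    intro s hs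
    have hpos := hlampos s hs
    have hne : lam s ≠ 0 := ne_of_gt hpos
    have hL := (hlamdiff s hs).hasDerivAt
    have h1 : HasDerivAt (fun x => τ * lam x * x)
        (τ * deriv lam s * s + τ * lam s * 1) s :=
      (hL.const_mul τ).mul (hasDerivAt_id s)
    have h2 : HasDerivAt (fun x => Real.log (lam x)) ((lam s)⁻¹ * deriv lam s) s :=
      (Real.hasDerivAt_log hne).comp s hL
    have h3 : HasDerivAt (fun x => ρ (lam x)) (deriv ρ (lam s) * deriv lam s) s :=
      ((hρ1 _ hpos).hasDerivAt).comp s hL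
    have h := (h1.sub h2).add h3
    refine h.congr_deriv ?_
    have hst : (τ * s + deriv ρ (lam s)) * lam s = 1 := by
      rw [mul_comm]; exact hstat s hs
    have hinv : (lam s)⁻¹ = τ * s + deriv ρ (lam s) := by
      rw [inv_eq_one_div, ← eq_one_div_of_mul_eq_one_left hst]
    rw [hinv]; ring
  have h1 : DifferentiableAt ℝ g t := (hgd t ht.le).differentiableAt
  refine ⟨h1, ?_⟩
  have hev : deriv g =ᶠ[nhds t] fun s => τ * lam s := by
    filter_upwards [eventually_gt_nhds ht] with s hs
    exact (hgd s hs.le).deriv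
  have hpos := hlampos t ht.le
  have hne : lam t ≠ 0 := ne_of_gt hpos
  have hL := (hlamdiff t ht.le).hasDerivAt
  set D := deriv lam t with hD
  set A := τ * t + deriv ρ (lam t) with hA
  set B := deriv (deriv ρ) (lam t) with hB
  -- implicit differentiation of the stationarity identity
  have hinner : HasDerivAt (fun s => τ * s + deriv ρ (lam s)) (τ * 1 + B * D) t :=
    ((hasDerivAt_id t).const_mul τ).add (((hρ2 _ hpos).hasDerivAt).comp t hL)
  have hF : HasDerivAt (fun s => lam s * (τ * s + deriv ρ (lam s)))
      (D * (τ * t + deriv ρ (lam t)) + lam t * (τ * 1 + B * D)) t := hL.mul hinner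
  have hFconst : HasDerivAt (fun s => lam s * (τ * s + deriv ρ (lam s))) 0 t := by
    refine (hasDerivAt_const t (1:ℝ)).congr_of_eventuallyEq ?_
    filter_upwards [eventually_gt_nhds ht] with s hs
    exact hstat s hs.le
  have hkey : D * A + lam t * (τ * 1 + B * D) = 0 := by
    have := hF.unique hFconst
    rw [← hA] at this
    exact this
  have hstt : lam t * A = 1 := hstat t ht.le
  have hAeq : A = 1 / lam t := eq_one_div_of_mul_eq_one_left (by rw [mul_comm]; exact hstt)
  have hABne : A ^ 2 + B ≠ 0 := by
    have h := hnz t ht.le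
    have : A ^ 2 + B = 1 / (lam t) ^ 2 + B := by rw [hAeq]; ring
    rw [this]; exact h
  have hfinal : HasDerivAt (deriv g) (τ * D) t :=
    (hL.const_mul τ).congr_of_eventuallyEq hev
  convert hfinal using 1
  rw [eq_comm, eq_div_iff hABne]
  linear_combination (τ * A) * hkey - (τ^2 + τ * B * D) * hstt
end
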